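/- Let P be a Markov kernel on a measurable space and ν a probability measure (not necessarily invariant under P) such that ‖P(x,·) − ν‖_tv ≤ ρ for all x, for some ρ ∈ (0,1). Then P satisfies a Doeblin condition and therefore admits an invariant probability measure π with ‖π − ν‖_tv ≤ ρ; moreover, there exists κ ∈ (0,1) such that for all k ≥ 1 and all x, ‖P^k(x,·) − ν‖_tv ≤ κ^k + ρ. -/

import Mathlib

open MeasureTheory ProbabilityTheory

/-- Total variation distance `‖μ − ν‖_tv = sup_{f : |f| ≤ 1} |μ(f) − ν(f)|`. -/
noncomputable def tvDist {Θ : Type*} [MeasurableSpace Θ] (μ ν : Measure Θ) : ℝ :=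
  sSup {r : ℝ | ∃ f : Θ → ℝ, Measurable f ∧ (∀ x, |f x| ≤ 1) ∧
    r = |(∫ x, f x ∂μ) - ∫ x, f x ∂ν|}

/-- The `k`-fold iterate `P^k(x, ·)` of a Markov kernel. -/
noncomputable def kernelIter {Θ : Type*} [MeasurableSpace Θ] (P : Kernel Θ Θ) :
    ℕ → Θ → Measure Θ
  | 0, x => Measure.dirac x
  | n + 1, x => (kernelIter P n x).bind (fun y => P y)

open Filter Topology
open scoped ENNReal NNReal

namespace DoeblinAux
variable {Θ : Type*} [MeasurableSpace Θ]

noncomputable def KI (P : Kernel Θ Θ) : ℕ → Kernel Θ Θ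
  | 0 => Kernel.id
  | n + 1 => P ∘ₖ KI P n

instance instMarkovKI (P : Kernel Θ Θ) [IsMarkovKernel P] (n : ℕ) :
    IsMarkovKernel (KI P n) := by
  induction n with
  | zero => exact inferInstanceAs (IsMarkovKernel (Kernel.id : Kernel Θ Θ))
  | succ n ih => exact inferInstanceAs (IsMarkovKernel (P ∘ₖ KI P n))

lemma KI_add (P : Kernel Θ Θ) [IsMarkovKernel P] (k m : ℕ) :
    KI P (k + m) = KI P k ∘ₖ KI P m := by
  induction k with
  | zero => simp [KI, Kernel.id_comp]
  | succ k ih =>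
      have h : k + 1 + m = (k + m) + 1 := by omega
      rw [h]
      show P ∘ₖ KI P (k + m) = (P ∘ₖ KI P k) ∘ₖ KI P m
      rw [ih, Kernel.comp_assoc]

lemma KI_succ_eq_comp_P (P : Kernel Θ Θ) [IsMarkovKernel P] (n : ℕ) :
    KI P (n + 1) = KI P n ∘ₖ P := by
  have h1 : KI P 1 = P := by
    show P ∘ₖ Kernel.id = P
    exact Kernel.comp_id P
  have := KI_add P n 1
  rw [h1] at this
  exact this

lemma intg_of_bounded {μ : Measure Θ} [IsFiniteMeasure μ] {f : Θ → ℝ} {C : ℝ}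
    (hf : Measurable f) (hb : ∀ x, |f x| ≤ C) : Integrable f μ := by
  refine (integrable_const C).mono' hf.aestronglyMeasurable ?_
  exact Filter.Eventually.of_forall fun x => by simpa using hb x

lemma abs_integral_le {μ : Measure Θ} [IsProbabilityMeasure μ] {f : Θ → ℝ} {C : ℝ}
    (hb : ∀ x, |f x| ≤ C) : |∫ x, f x ∂μ| ≤ C := by
  have := norm_integral_le_of_norm_le_const (μ := μ) (f := f) (C := C)
    (Filter.Eventually.of_forall fun x => by simpa using hb x)
  simpa using this

lemma tv_bddAbove (μ ν : Measure Θ) [IsProbabilityMeasure μ] [IsProbabilityMeasure ν] :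
    BddAbove {r : ℝ | ∃ f : Θ → ℝ, Measurable f ∧ (∀ x, |f x| ≤ 1) ∧
      r = |(∫ x, f x ∂μ) - ∫ x, f x ∂ν|} := by
  refine ⟨2, fun r hr => ?_⟩
  obtain ⟨f, hf, hb, rfl⟩ := hr
  have h1 : |∫ x, f x ∂μ| ≤ 1 := abs_integral_le hb
  have h2 : |∫ x, f x ∂ν| ≤ 1 := abs_integral_le hb
  calc |(∫ x, f x ∂μ) - ∫ x, f x ∂ν| ≤ |∫ x, f x ∂μ| + |∫ x, f x ∂ν| := abs_sub _ _
    _ ≤ 2 := by linarith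

lemma le_tvDist (μ ν : Measure Θ) [IsProbabilityMeasure μ] [IsProbabilityMeasure ν]
    {f : Θ → ℝ} (hf : Measurable f) (hb : ∀ x, |f x| ≤ 1) :
    |(∫ x, f x ∂μ) - ∫ x, f x ∂ν| ≤ tvDist μ ν :=
  le_csSup (tv_bddAbove μ ν) ⟨f, hf, hb, rfl⟩

lemma tvDist_le (μ ν : Measure Θ) {c : ℝ} (hc : 0 ≤ c)
    (h : ∀ f : Θ → ℝ, Measurable f → (∀ x, |f x| ≤ 1) →
      |(∫ x, f x ∂μ) - ∫ x, f x ∂ν| ≤ c) : tvDist μ ν ≤ c := by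
  refine Real.sSup_le (fun r hr => ?_) hc
  obtain ⟨f, hf, hb, rfl⟩ := hr
  exact h f hf hb

lemma toReal_prob_le_one (μ : Measure Θ) [IsProbabilityMeasure μ] (A : Set Θ) :
    (μ A).toReal ≤ 1 := by
  have h := prob_le_one (μ := μ) (s := A)
  have := ENNReal.toReal_mono ENNReal.one_ne_top h
  simpa using this

section Contraction

variable (P : Kernel Θ Θ) [IsMarkovKernel P] (ν : Measure Θ) [IsProbabilityMeasure ν]
  {ρ : ℝ} (hρ0 : 0 < ρ) (hρ1 : ρ < 1) (hclose : ∀ x, tvDist (P x) ν ≤ ρ)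

include hclose in
lemma ptw_bound (x : Θ) {g : Θ → ℝ} (hg : Measurable g) (hb : ∀ y, |g y| ≤ 1) :
    |(∫ y, g y ∂(P x)) - ∫ y, g y ∂ν| ≤ ρ :=
  (le_tvDist (P x) ν hg hb).trans (hclose x)

include hclose in
lemma half_bound (x : Θ) {g : Θ → ℝ} (hg : Measurable g)
    (h0 : ∀ y, 0 ≤ g y) (h1 : ∀ y, g y ≤ 1) :
    |(∫ y, g y ∂(P x)) - ∫ y, g y ∂ν| ≤ ρ / 2 := by
  have hf : Measurable fun y => 2 * g y - 1 := by fun_prop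
  have hfb : ∀ y, |2 * g y - 1| ≤ 1 := by
    intro y; rw [abs_le]; constructor <;> nlinarith [h0 y, h1 y]
  have key := ptw_bound P ν hclose x hf hfb
  have hint : ∀ (μ : Measure Θ), IsProbabilityMeasure μ →
      ∫ y, (2 * g y - 1) ∂μ = 2 * ∫ y, g y ∂μ - 1 := by
    intro μ hμ
    haveI := hμ
    rw [integral_sub ((intg_of_bounded hg (fun y => by
      rw [abs_le]; exact ⟨by linarith [h0 y], h1 y⟩)).const_mul 2) (integrable_const 1)]
    rw [MeasureTheory.integral_const_mul, integral_const, probReal_univ]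
    simp
  rw [hint (P x) inferInstance, hint ν inferInstance] at key
  rw [show (2 * ∫ y, g y ∂(P x) - 1) - (2 * ∫ y, g y ∂ν - 1)
      = 2 * ((∫ y, g y ∂(P x)) - ∫ y, g y ∂ν) by ring, abs_mul] at key
  rw [abs_of_nonneg (by norm_num : (0:ℝ) ≤ 2)] at key
  linarith

include hclose in
lemma osc_one (x y : Θ) {g : Θ → ℝ} (hg : Measurable g)
    (h0 : ∀ z, 0 ≤ g z) (h1 : ∀ z, g z ≤ 1) :
    |(∫ z, g z ∂(P x)) - ∫ z, g z ∂(P y)| ≤ ρ := by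
  have hx := half_bound P ν hclose x hg h0 h1
  have hy := half_bound P ν hclose y hg h0 h1
  calc |(∫ z, g z ∂(P x)) - ∫ z, g z ∂(P y)|
      ≤ |(∫ z, g z ∂(P x)) - ∫ z, g z ∂ν| + |(∫ z, g z ∂ν) - ∫ z, g z ∂(P y)| :=
        abs_sub_le _ _ _
    _ ≤ ρ / 2 + ρ / 2 := add_le_add hx (by rwa [abs_sub_comm])
    _ = ρ := by ring

include hρ0 hclose in
lemma oscKI (n : ℕ) {A : Set Θ} (hA : MeasurableSet A) (x y : Θ) :
    |(KI P n x A).toReal - (KI P n y A).toReal| ≤ ρ ^ n := by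
  induction n generalizing x y with
  | zero =>
      rw [pow_zero, abs_le]
      have h1 := toReal_prob_le_one (KI P 0 x) A
      have h2 := toReal_prob_le_one (KI P 0 y) A
      have h3 : 0 ≤ (KI P 0 x A).toReal := ENNReal.toReal_nonneg
      have h4 : 0 ≤ (KI P 0 y A).toReal := ENNReal.toReal_nonneg
      constructor <;> linarith
  | succ n ih =>
      haveI : Nonempty Θ := ⟨x⟩
      set r : Θ → ℝ := fun z => (KI P n z A).toReal with hr
      have hrm : Measurable r := (Kernel.measurable_coe _ hA).ennreal_toReal
      have hr0 : ∀ z, 0 ≤ r z := fun z => ENNReal.toReal_nonneg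
      have hr1 : ∀ z, r z ≤ 1 := fun z => toReal_prob_le_one _ A
      have hrepr : ∀ z, (KI P (n+1) z A).toReal = ∫ w, r w ∂(P z) := by
        intro z
        rw [KI_succ_eq_comp_P, Kernel.comp_apply' _ _ _ hA]
        exact (integral_toReal ((Kernel.measurable_coe _ hA).aemeasurable)
          (Filter.Eventually.of_forall fun w => measure_lt_top _ _)).symm
      have hbdd : BddBelow (Set.range r) := ⟨0, by rintro _ ⟨z, rfl⟩; exact hr0 z⟩
      set m : ℝ := ⨅ z, r z with hm
      have hm0 : 0 ≤ m := le_ciInf fun z => hr0 z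
      have hmle : ∀ z, m ≤ r z := fun z => ciInf_le hbdd z
      have hub : ∀ z, r z ≤ m + ρ ^ n := by
        intro z
        have : r z - ρ ^ n ≤ m := le_ciInf fun w => by
          have := ih z w; rw [abs_le] at this; linarith [this.1]
        linarith
      have hρn : (0:ℝ) < ρ ^ n := pow_pos hρ0 n
      set g : Θ → ℝ := fun z => (r z - m) / ρ ^ n with hg
      have hgm : Measurable g := (hrm.sub measurable_const).div_const _
      have hg0 : ∀ z, 0 ≤ g z := fun z => div_nonneg (by linarith [hmle z]) hρn.le
      have hg1 : ∀ z, g z ≤ 1 := fun z => by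
        rw [div_le_one hρn]; linarith [hub z]
      have hrg : ∀ z, r z = ρ ^ n * g z + m := by
        intro z
        show r z = ρ ^ n * ((r z - m) / ρ ^ n) + m
        rw [mul_div_cancel₀ _ hρn.ne']; ring
      have hint : ∀ z : Θ, ∫ w, r w ∂(P z) = ρ ^ n * (∫ w, g w ∂(P z)) + m := by
        intro z
        calc ∫ w, r w ∂(P z) = ∫ w, (ρ ^ n * g w + m) ∂(P z) := by
              congr 1; funext w; exact hrg w
          _ = ρ ^ n * (∫ w, g w ∂(P z)) + m := by
              rw [integral_add (((intg_of_bounded hgm (fun w => by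
                  rw [abs_of_nonneg (hg0 w)]; exact hg1 w)).const_mul _))
                (integrable_const m), MeasureTheory.integral_const_mul, integral_const,
                probReal_univ]
              simp
      rw [hrepr x, hrepr y, hint x, hint y]
      have hosc := osc_one P ν hclose x y hgm hg0 hg1
      have heq : ρ ^ n * (∫ w, g w ∂(P x)) + m - (ρ ^ n * (∫ w, g w ∂(P y)) + m)
          = ρ ^ n * ((∫ w, g w ∂(P x)) - ∫ w, g w ∂(P y)) := by ring
      rw [heq, abs_mul, abs_of_nonneg hρn.le]
      calc ρ ^ n * |(∫ w, g w ∂(P x)) - ∫ w, g w ∂(P y)|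
          ≤ ρ ^ n * ρ := mul_le_mul_of_nonneg_left hosc hρn.le
        _ = ρ ^ (n+1) := by ring

include hρ0 hclose in
lemma cauchyKI (k m : ℕ) {A : Set Θ} (hA : MeasurableSet A) (x : Θ) :
    |(KI P (k + m) x A).toReal - (KI P k x A).toReal| ≤ ρ ^ k := by
  set r : Θ → ℝ := fun z => (KI P k z A).toReal with hr
  have hrm : Measurable r := (Kernel.measurable_coe _ hA).ennreal_toReal
  have hrepr : (KI P (k+m) x A).toReal = ∫ w, r w ∂(KI P m x) := by
    rw [KI_add, Kernel.comp_apply' _ _ _ hA]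
    exact (integral_toReal ((Kernel.measurable_coe _ hA).aemeasurable)
      (Filter.Eventually.of_forall fun w => measure_lt_top _ _)).symm
  rw [hrepr]
  have hsub : (∫ w, r w ∂(KI P m x)) - r x = ∫ w, (r w - r x) ∂(KI P m x) := by
    rw [integral_sub (intg_of_bounded hrm (fun w => by
        rw [abs_of_nonneg ENNReal.toReal_nonneg]; exact toReal_prob_le_one _ A))
      (integrable_const (r x)), integral_const, probReal_univ]
    simp
  rw [hsub]
  exact abs_integral_le (C := ρ ^ k) (fun w => oscKI P ν hρ0 hclose k hA w x)

omit ν in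
lemma isProbabilityMeasure_bind (μ : Measure Θ) [IsProbabilityMeasure μ] :
    IsProbabilityMeasure (μ.bind (fun x => P x)) := by
  constructor
  rw [Measure.bind_apply MeasurableSet.univ P.measurable.aemeasurable]
  simp [measure_univ]

omit ν in
lemma integral_bind_eq (μ : Measure Θ) [IsProbabilityMeasure μ] {f : Θ → ℝ}
    (hf : Measurable f) (hb : ∀ y, |f y| ≤ 1) :
    ∫ y, f y ∂(μ.bind (fun x => P x)) = ∫ x, ∫ y, f y ∂(P x) ∂μ := by
  haveI := isProbabilityMeasure_bind P μ
  set fp : Θ → ℝ≥0∞ := fun y => ENNReal.ofReal (f y) with hfp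
  set fn : Θ → ℝ≥0∞ := fun y => ENNReal.ofReal (-(f y)) with hfn
  have hfpm : Measurable fp := hf.ennreal_ofReal
  have hfnm : Measurable fn := hf.neg.ennreal_ofReal
  have hfp1 : ∀ y, fp y ≤ 1 := fun y => by
    rw [hfp]; simp only []
    rw [show (1:ℝ≥0∞) = ENNReal.ofReal 1 by simp]
    exact ENNReal.ofReal_le_ofReal (by have := hb y; rw [abs_le] at this; exact this.2)
  have hfn1 : ∀ y, fn y ≤ 1 := fun y => by
    rw [hfn]; simp only []
    rw [show (1:ℝ≥0∞) = ENNReal.ofReal 1 by simp]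
    exact ENNReal.ofReal_le_ofReal (by have := hb y; rw [abs_le] at this; linarith [this.1])
  have hrepr : ∀ (τ : Measure Θ), IsProbabilityMeasure τ → ∫ y, f y ∂τ
      = (∫⁻ y, fp y ∂τ).toReal - (∫⁻ y, fn y ∂τ).toReal := by
    intro τ hτ
    haveI := hτ
    exact integral_eq_lintegral_pos_part_sub_lintegral_neg_part (intg_of_bounded hf hb)
  set A : Θ → ℝ≥0∞ := fun x => ∫⁻ y, fp y ∂(P x) with hA
  set B : Θ → ℝ≥0∞ := fun x => ∫⁻ y, fn y ∂(P x) with hB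
  have hAm : Measurable A := hfpm.lintegral_kernel
  have hBm : Measurable B := hfnm.lintegral_kernel
  have hA1 : ∀ x, A x ≤ 1 := fun x => by
    calc A x ≤ ∫⁻ _, 1 ∂(P x) := lintegral_mono fun y => hfp1 y
      _ = 1 := by simp [measure_univ]
  have hB1 : ∀ x, B x ≤ 1 := fun x => by
    calc B x ≤ ∫⁻ _, 1 ∂(P x) := lintegral_mono fun y => hfn1 y
      _ = 1 := by simp [measure_univ]
  have hAlt : ∀ x, A x < ⊤ := fun x => lt_of_le_of_lt (hA1 x) ENNReal.one_lt_top
  have hBlt : ∀ x, B x < ⊤ := fun x => lt_of_le_of_lt (hB1 x) ENNReal.one_lt_top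
  have step1 : ∫ y, f y ∂(μ.bind (fun x => P x))
      = (∫⁻ x, A x ∂μ).toReal - (∫⁻ x, B x ∂μ).toReal := by
    rw [hrepr _ inferInstance,
      Measure.lintegral_bind P.measurable.aemeasurable hfpm.aemeasurable, Measure.lintegral_bind P.measurable.aemeasurable hfnm.aemeasurable]
  have step2 : (∫⁻ x, A x ∂μ).toReal = ∫ x, (A x).toReal ∂μ :=
    (integral_toReal hAm.aemeasurable (Filter.Eventually.of_forall hAlt)).symm
  have step3 : (∫⁻ x, B x ∂μ).toReal = ∫ x, (B x).toReal ∂μ :=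
    (integral_toReal hBm.aemeasurable (Filter.Eventually.of_forall hBlt)).symm
  have hAint : Integrable (fun x => (A x).toReal) μ :=
    intg_of_bounded hAm.ennreal_toReal (C := 1) (fun x => by
      rw [abs_of_nonneg ENNReal.toReal_nonneg]
      exact (ENNReal.toReal_le_of_le_ofReal zero_le_one (by simpa using hA1 x)))
  have hBint : Integrable (fun x => (B x).toReal) μ :=
    intg_of_bounded hBm.ennreal_toReal (C := 1) (fun x => by
      rw [abs_of_nonneg ENNReal.toReal_nonneg]
      exact (ENNReal.toReal_le_of_le_ofReal zero_le_one (by simpa using hB1 x)))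
  rw [step1, step2, step3, ← integral_sub hAint hBint]
  congr 1
  funext x
  exact (hrepr (P x) inferInstance).symm

include hclose in
lemma tv_bind_le (hρ0' : 0 ≤ ρ) (μ : Measure Θ) [IsProbabilityMeasure μ] :
    tvDist (μ.bind (fun x => P x)) ν ≤ ρ := by
  haveI := isProbabilityMeasure_bind P μ
  refine tvDist_le _ _ hρ0' ?_
  intro f hf hb
  rw [integral_bind_eq P μ hf hb]
  set fp : Θ → ℝ≥0∞ := fun y => ENNReal.ofReal (f y) with hfp
  set fn : Θ → ℝ≥0∞ := fun y => ENNReal.ofReal (-(f y)) with hfn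
  have hfpm : Measurable fp := hf.ennreal_ofReal
  have hfnm : Measurable fn := hf.neg.ennreal_ofReal
  have hinner_meas : Measurable fun x => ∫ y, f y ∂(P x) := by
    have : (fun x => ∫ y, f y ∂(P x))
        = fun x => (∫⁻ y, fp y ∂(P x)).toReal - (∫⁻ y, fn y ∂(P x)).toReal := by
      funext x
      exact integral_eq_lintegral_pos_part_sub_lintegral_neg_part (intg_of_bounded hf hb)
    rw [this]
    exact (hfpm.lintegral_kernel.ennreal_toReal).sub (hfnm.lintegral_kernel.ennreal_toReal)
  set c : ℝ := ∫ y, f y ∂ν with hc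
  have hsub : (∫ x, ∫ y, f y ∂(P x) ∂μ) - c = ∫ x, ((∫ y, f y ∂(P x)) - c) ∂μ := by
    rw [integral_sub (intg_of_bounded hinner_meas (C := 1)
        (fun x => abs_integral_le hb)) (integrable_const c), integral_const, probReal_univ]
    simp
  rw [hsub]
  exact abs_integral_le (C := ρ) (fun x => ptw_bound P ν hclose x hf hb)

end Contraction

lemma lintegral_le_of_setwise {μ π : Measure Θ} [IsFiniteMeasure μ] [IsFiniteMeasure π]
    {g : Θ → ℝ≥0∞} (hg : Measurable g) (hg1 : ∀ x, g x ≤ 1) {ε : ℝ≥0∞}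
    (h : ∀ A, MeasurableSet A → μ A ≤ π A + ε) :
    ∫⁻ x, g x ∂μ ≤ (∫⁻ x, g x ∂π) + ε := by
  set f : Θ → ℝ := fun x => (g x).toReal with hf
  have hfm : Measurable f := hg.ennreal_toReal
  have hgf : ∀ x, g x = ENNReal.ofReal (f x) := fun x =>
    (ENNReal.ofReal_toReal (ne_top_of_le_ne_top ENNReal.one_ne_top (hg1 x))).symm
  have hf1 : ∀ x, f x ≤ 1 := fun x => by
    have := ENNReal.toReal_mono ENNReal.one_ne_top (hg1 x)
    simpa using this
  have hsets : ∀ t : ℝ, MeasurableSet {a | t < f a} :=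
    fun t => measurableSet_lt measurable_const hfm
  have hempty : ∀ t : ℝ, 1 ≤ t → {a | t < f a} = ∅ := by
    intro t ht
    ext a
    simp only [Set.mem_setOf_eq, Set.mem_empty_iff_false, iff_false, not_lt]
    exact (hf1 a).trans ht
  have lc : ∀ (τ : Measure Θ), ∫⁻ x, g x ∂τ
      = ∫⁻ t in Set.Ioc (0:ℝ) 1, τ {a | t < f a} := by
    intro τ
    have h1 : ∫⁻ x, g x ∂τ = ∫⁻ x, ENNReal.ofReal (f x) ∂τ :=
      lintegral_congr fun x => hgf x
    rw [h1, lintegral_eq_lintegral_meas_lt τ (Filter.Eventually.of_forall fun x =>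
      ENNReal.toReal_nonneg) hfm.aemeasurable]
    have hsplit : Set.Ioi (0:ℝ) = Set.Ioc 0 1 ∪ Set.Ioi 1 :=
      (Set.Ioc_union_Ioi_eq_Ioi zero_le_one).symm
    rw [hsplit, lintegral_union measurableSet_Ioi (Set.Ioc_disjoint_Ioi le_rfl)]
    have hz : ∫⁻ t in Set.Ioi (1:ℝ), τ {a | t < f a} = 0 := by
      have : (∫⁻ t in Set.Ioi (1:ℝ), τ {a | t < f a})
          = ∫⁻ _ in Set.Ioi (1:ℝ), (0:ℝ≥0∞) :=
        setLIntegral_congr_fun measurableSet_Ioi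
          ((fun t (ht : t ∈ Set.Ioi (1:ℝ)) => by
            rw [hempty t (le_of_lt ht)]
            exact measure_empty))
      rw [this]
      simp
    rw [hz, add_zero]
  rw [lc μ, lc π]
  calc ∫⁻ t in Set.Ioc (0:ℝ) 1, μ {a | t < f a}
      ≤ ∫⁻ t in Set.Ioc (0:ℝ) 1, (π {a | t < f a} + ε) :=
        lintegral_mono fun t => h _ (hsets t)
    _ = (∫⁻ t in Set.Ioc (0:ℝ) 1, π {a | t < f a}) + ε := by
        rw [lintegral_add_right _ measurable_const, lintegral_const,
          Measure.restrict_apply_univ, Real.volume_Ioc]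
        simp


lemma kernelIter_eq (P : Kernel Θ Θ) [IsMarkovKernel P] (n : ℕ) (x : Θ) :
    kernelIter P n x = KI P n x := by
  induction n with
  | zero => simp [kernelIter, KI, Kernel.id_apply]
  | succ n ih =>
      show (kernelIter P n x).bind (fun y => P y) = (P ∘ₖ KI P n) x
      rw [ih, Kernel.comp_apply]

end DoeblinAux

open DoeblinAux

/- STATEMENT 10: If `P` is a Markov kernel and `ν` a probability measure with
`‖P(x,·) − ν‖_tv ≤ ρ` for all `x`, for some `ρ ∈ (0,1)`, then `P` admits an invariant
probability measure `π` with `‖π − ν‖_tv ≤ ρ`, and there exists `κ ∈ (0,1)` such that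
for all `k ≥ 1` and all `x`, `‖P^k(x,·) − ν‖_tv ≤ κ^k + ρ`. -/
theorem doeblin_cyclical
    {Θ : Type*} [MeasurableSpace Θ]
    (P : Kernel Θ Θ) (hP : IsMarkovKernel P)
    (ν : Measure Θ) (hν : IsProbabilityMeasure ν)
    (ρ : ℝ) (hρ0 : 0 < ρ) (hρ1 : ρ < 1)
    (hclose : ∀ x, tvDist (P x) ν ≤ ρ) :
    (∃ π : Measure Θ, IsProbabilityMeasure π ∧ π.bind (fun x => P x) = π ∧ tvDist π ν ≤ ρ) ∧
    (∃ κ : ℝ, 0 < κ ∧ κ < 1 ∧ ∀ k : ℕ, 1 ≤ k → ∀ x : Θ,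
      tvDist (kernelIter P k x) ν ≤ κ ^ k + ρ) := by
  haveI := hP
  haveI := hν
  have hne : Nonempty Θ := by
    by_contra h
    rw [not_nonempty_iff] at h
    have h1 : ν Set.univ = 1 := measure_univ
    rw [Set.univ_eq_empty_iff.mpr h] at h1
    simp at h1
  obtain ⟨x₀⟩ := hne
  set u : Set Θ → ℕ → ℝ := fun A k => ((KI P k x₀) A).toReal with hu
  have hcau : ∀ (A : Set Θ), MeasurableSet A → ∀ k m : ℕ, |u A (k + m) - u A k| ≤ ρ ^ k :=
    fun A hA k m => cauchyKI P ν hρ0 hclose k m hA x₀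
  have hlim : ∀ A : Set Θ, MeasurableSet A →
      ∃ l : ℝ, Filter.Tendsto (fun k => u A k) Filter.atTop (nhds l) := by
    intro A hA
    refine cauchySeq_tendsto_of_complete (cauchySeq_of_le_geometric ρ 1 hρ1 fun n => ?_)
    rw [Real.dist_eq, abs_sub_comm, one_mul]
    exact hcau A hA n 1
  choose F hF using hlim
  have hF0 : ∀ A hA, 0 ≤ F A hA := fun A hA =>
    ge_of_tendsto (hF A hA) (Filter.Eventually.of_forall fun k => ENNReal.toReal_nonneg)
  have hF1 : ∀ A hA, F A hA ≤ 1 := fun A hA =>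
    le_of_tendsto (hF A hA) (Filter.Eventually.of_forall fun k => toReal_prob_le_one _ A)
  have hFclose : ∀ A hA (k : ℕ), |F A hA - u A k| ≤ ρ ^ k := by
    intro A hA k
    have h1 : Filter.Tendsto (fun m => u A (m + k)) Filter.atTop (nhds (F A hA)) :=
      (hF A hA).comp (tendsto_add_atTop_nat k)
    have h2 : Filter.Tendsto (fun m => |u A (m + k) - u A k|) Filter.atTop
        (nhds (|F A hA - u A k|)) := (h1.sub tendsto_const_nhds).abs
    exact le_of_tendsto h2 (Filter.Eventually.of_forall fun m => by
      rw [add_comm m k]; exact hcau A hA k m)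
  have hF_empty : F ∅ MeasurableSet.empty = 0 := by
    have h1 : Filter.Tendsto (fun k => u ∅ k) Filter.atTop (nhds 0) := by
      have h2 : ∀ k : ℕ, u ∅ k = 0 := fun k => by simp [hu]
      simp only [h2]
      exact tendsto_const_nhds
    exact tendsto_nhds_unique (hF ∅ MeasurableSet.empty) h1
  have hσ : ∀ ⦃f : ℕ → Set Θ⦄ (h : ∀ i, MeasurableSet (f i)),
      Pairwise (Function.onFun Disjoint f) →
      ENNReal.ofReal (F (⋃ i, f i) (MeasurableSet.iUnion h))
        = ∑' i, ENNReal.ofReal (F (f i) (h i)) := by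
    intro f hfm hd
    have hU : MeasurableSet (⋃ i, f i) := MeasurableSet.iUnion hfm
    have hM : ∀ N : ℕ, MeasurableSet (⋃ i ∈ Finset.range N, f i) := fun N =>
      (Finset.range N).measurableSet_biUnion (fun i _ => hfm i)
    have hpart : ∀ N : ℕ, ∑ i ∈ Finset.range N, F (f i) (hfm i)
        = F (⋃ i ∈ Finset.range N, f i) (hM N) := by
      intro N
      have h1 : ∀ k, u (⋃ i ∈ Finset.range N, f i) k = ∑ i ∈ Finset.range N, u (f i) k := by
        intro k
        have h2 : (KI P k x₀) (⋃ i ∈ Finset.range N, f i)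
            = ∑ i ∈ Finset.range N, (KI P k x₀) (f i) :=
          measure_biUnion_finset (hd.set_pairwise _) (fun i _ => hfm i)
        show ((KI P k x₀) (⋃ i ∈ Finset.range N, f i)).toReal = _
        rw [h2, ENNReal.toReal_sum (fun i _ => measure_ne_top _ _)]
      have h3 : Filter.Tendsto (fun k => ∑ i ∈ Finset.range N, u (f i) k) Filter.atTop
          (nhds (∑ i ∈ Finset.range N, F (f i) (hfm i))) :=
        tendsto_finset_sum _ (fun i _ => hF (f i) (hfm i))
      have h4 : Filter.Tendsto (fun k => u (⋃ i ∈ Finset.range N, f i) k) Filter.atTop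
          (nhds (∑ i ∈ Finset.range N, F (f i) (hfm i))) := by
        simpa only [h1] using h3
      exact tendsto_nhds_unique h4 (hF _ (hM N))
    have hBt : Filter.Tendsto (fun N => F (⋃ i ∈ Finset.range N, f i) (hM N)) Filter.atTop
        (nhds (F (⋃ i, f i) hU)) := by
      rw [Metric.tendsto_atTop]
      intro ε hε
      obtain ⟨k, hk⟩ := exists_pow_lt_of_lt_one (show (0:ℝ) < ε/4 by linarith) hρ1
      have hρk0 : (0:ℝ) ≤ ρ ^ k := pow_nonneg hρ0.le k
      have hdisj : ∀ N : ℕ, Pairwise (Function.onFun Disjoint (fun i => f (i + N))) :=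
        fun N i j hij => hd (by omega)
      have hmeq : ∀ N : ℕ, (KI P k x₀) (⋃ i, f (i + N)) = ∑' i, (KI P k x₀) (f (i + N)) :=
        fun N => measure_iUnion (hdisj N) (fun i => hfm _)
      have hfin : ∑' i, (KI P k x₀) (f i) ≠ ⊤ := by
        rw [← measure_iUnion hd hfm]
        exact measure_ne_top _ _
      have htail0 : Filter.Tendsto (fun N => (KI P k x₀) (⋃ i, f (i + N))) Filter.atTop
          (nhds 0) := by
        have h5 := ENNReal.tendsto_sum_nat_add (fun i => (KI P k x₀) (f i)) hfin
        simpa only [hmeq] using h5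
      have htail : ∀ᶠ N in Filter.atTop,
          (KI P k x₀) (⋃ i, f (i + N)) < ENNReal.ofReal (ε/2) :=
        htail0.eventually_lt_const (ENNReal.ofReal_pos.mpr (by linarith))
      rw [Filter.eventually_atTop] at htail
      obtain ⟨N₀, hN₀⟩ := htail
      refine ⟨N₀, fun N hN => ?_⟩
      have hTlt := hN₀ N hN
      have hST : (⋃ i, f i) = (⋃ i ∈ Finset.range N, f i) ∪ (⋃ i, f (i + N)) := by
        ext z
        simp only [Set.mem_iUnion, Set.mem_union, Finset.mem_range]
        constructor
        · rintro ⟨i, hi⟩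
          rcases lt_or_ge i N with hlt | hge
          · exact Or.inl ⟨i, hlt, hi⟩
          · exact Or.inr ⟨i - N, by rwa [Nat.sub_add_cancel hge]⟩
        · rintro (⟨i, _, hi⟩ | ⟨i, hi⟩)
          · exact ⟨i, hi⟩
          · exact ⟨i + N, hi⟩
      have hub : (KI P k x₀) (⋃ i, f i)
          ≤ (KI P k x₀) (⋃ i ∈ Finset.range N, f i) + (KI P k x₀) (⋃ i, f (i + N)) := by
        rw [hST]; exact measure_union_le _ _
      have hlb : (KI P k x₀) (⋃ i ∈ Finset.range N, f i) ≤ (KI P k x₀) (⋃ i, f i) :=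
        measure_mono (by rw [hST]; exact Set.subset_union_left)
      have hr1 : u (⋃ i, f i) k ≤ u (⋃ i ∈ Finset.range N, f i) k
          + ((KI P k x₀) (⋃ i, f (i + N))).toReal := by
        have h6 := ENNReal.toReal_mono
          (by exact ENNReal.add_ne_top.mpr ⟨measure_ne_top _ _, measure_ne_top _ _⟩) hub
        rw [ENNReal.toReal_add (measure_ne_top _ _) (measure_ne_top _ _)] at h6
        exact h6
      have hr2 : u (⋃ i ∈ Finset.range N, f i) k ≤ u (⋃ i, f i) k :=
        ENNReal.toReal_mono (measure_ne_top _ _) hlb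
      have hr3 : ((KI P k x₀) (⋃ i, f (i + N))).toReal < ε/2 :=
        ENNReal.toReal_lt_of_lt_ofReal hTlt
      have hc1 := hFclose (⋃ i ∈ Finset.range N, f i) (hM N) k
      have hc2 := hFclose (⋃ i, f i) hU k
      rw [Real.dist_eq]
      have habs : ∀ a b c d : ℝ, |a - b| ≤ |a - c| + |c - d| + |d - b| := by
        intro a b c d
        calc |a - b| ≤ |a - c| + |c - b| := abs_sub_le a c b
          _ ≤ |a - c| + (|c - d| + |d - b|) := by linarith [abs_sub_le c d b]
          _ = _ := by ring
      have e2 : |u (⋃ i ∈ Finset.range N, f i) k - u (⋃ i, f i) k|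
          ≤ ((KI P k x₀) (⋃ i, f (i + N))).toReal := by
        rw [abs_sub_comm, abs_of_nonneg (by linarith)]
        linarith
      have e3 : |u (⋃ i, f i) k - F (⋃ i, f i) hU| ≤ ρ ^ k := by
        rw [abs_sub_comm]; exact hc2
      calc |F (⋃ i ∈ Finset.range N, f i) (hM N) - F (⋃ i, f i) hU|
          ≤ |F (⋃ i ∈ Finset.range N, f i) (hM N) - u (⋃ i ∈ Finset.range N, f i) k|
            + |u (⋃ i ∈ Finset.range N, f i) k - u (⋃ i, f i) k|
            + |u (⋃ i, f i) k - F (⋃ i, f i) hU| := habs _ _ _ _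
        _ < ε := by linarith [hc1]
    have hsum : HasSum (fun i => F (f i) (hfm i)) (F (⋃ i, f i) hU) := by
      rw [hasSum_iff_tendsto_nat_of_nonneg (fun i => hF0 _ _)]
      simpa only [hpart] using hBt
    rw [← hsum.tsum_eq, ENNReal.ofReal_tsum_of_nonneg (fun i => hF0 _ _) hsum.summable]
  set π : Measure Θ := Measure.ofMeasurable (fun A hA => ENNReal.ofReal (F A hA))
    (by show ENNReal.ofReal (F ∅ MeasurableSet.empty) = 0
        rw [hF_empty]; simp) hσ with hπ
  have hπap : ∀ A (hA : MeasurableSet A), π A = ENNReal.ofReal (F A hA) := fun A hA =>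
    Measure.ofMeasurable_apply A hA
  haveI hπprob : IsProbabilityMeasure π := by
    constructor
    rw [hπap _ MeasurableSet.univ]
    have h1 : ∀ k : ℕ, u Set.univ k = 1 := fun k => by simp [hu, measure_univ]
    have h2 : F Set.univ MeasurableSet.univ = 1 := by
      refine tendsto_nhds_unique (hF _ _) ?_
      simp only [h1]
      exact tendsto_const_nhds
    rw [h2]
    simp
  have hsw1 : ∀ (k : ℕ) (A : Set Θ), MeasurableSet A →
      (KI P k x₀) A ≤ π A + ENNReal.ofReal (ρ ^ k) := by
    intro k A hA
    have h1 : u A k ≤ F A hA + ρ ^ k := by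
      have := hFclose A hA k; rw [abs_le] at this; linarith [this.1]
    have h2 : (KI P k x₀) A = ENNReal.ofReal (u A k) :=
      (ENNReal.ofReal_toReal (measure_ne_top _ _)).symm
    rw [h2, hπap A hA, ← ENNReal.ofReal_add (hF0 A hA) (pow_nonneg hρ0.le k)]
    exact ENNReal.ofReal_le_ofReal h1
  have hsw2 : ∀ (k : ℕ) (A : Set Θ), MeasurableSet A →
      π A ≤ (KI P k x₀) A + ENNReal.ofReal (ρ ^ k) := by
    intro k A hA
    have h1 : F A hA ≤ u A k + ρ ^ k := by
      have := hFclose A hA k; rw [abs_le] at this; linarith [this.2]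
    have h2 : (KI P k x₀) A = ENNReal.ofReal (u A k) :=
      (ENNReal.ofReal_toReal (measure_ne_top _ _)).symm
    rw [h2, hπap A hA, ← ENNReal.ofReal_add ENNReal.toReal_nonneg (pow_nonneg hρ0.le k)]
    exact ENNReal.ofReal_le_ofReal h1
  have hinv : π.bind (fun x => P x) = π := by
    refine Measure.ext fun A hA => ?_
    rw [Measure.bind_apply hA P.measurable.aemeasurable]
    have hgm : Measurable (fun x => (P x) A) := P.measurable_coe hA
    have hg1 : ∀ x, (P x) A ≤ 1 := fun x => prob_le_one
    have hstep : ∀ k : ℕ, ∫⁻ x, (P x) A ∂(KI P k x₀) = (KI P (k+1) x₀) A := by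
      intro k
      rw [show KI P (k+1) = P ∘ₖ KI P k from rfl, Kernel.comp_apply' _ _ _ hA]
    have hkey : ∀ k : ℕ,
        (∫⁻ x, (P x) A ∂π ≤ π A + (ENNReal.ofReal (ρ ^ k) + ENNReal.ofReal (ρ ^ k)))
        ∧ π A ≤ (∫⁻ x, (P x) A ∂π) + (ENNReal.ofReal (ρ ^ k) + ENNReal.ofReal (ρ ^ k)) := by
      intro k
      have hmono : ENNReal.ofReal (ρ ^ (k+1)) ≤ ENNReal.ofReal (ρ ^ k) :=
        ENNReal.ofReal_le_ofReal (pow_le_pow_of_le_one hρ0.le hρ1.le (by omega))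
      have b1 : ∫⁻ x, (P x) A ∂π ≤ (∫⁻ x, (P x) A ∂(KI P k x₀)) + ENNReal.ofReal (ρ ^ k) :=
        lintegral_le_of_setwise hgm hg1 (fun B hB => hsw2 k B hB)
      have b2 : ∫⁻ x, (P x) A ∂(KI P k x₀) ≤ (∫⁻ x, (P x) A ∂π) + ENNReal.ofReal (ρ ^ k) :=
        lintegral_le_of_setwise hgm hg1 (fun B hB => hsw1 k B hB)
      constructor
      · calc ∫⁻ x, (P x) A ∂π ≤ (KI P (k+1) x₀) A + ENNReal.ofReal (ρ ^ k) := by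
              rw [← hstep k]; exact b1
          _ ≤ (π A + ENNReal.ofReal (ρ ^ (k+1))) + ENNReal.ofReal (ρ ^ k) :=
              add_le_add_left (hsw1 (k+1) A hA) _
          _ ≤ π A + (ENNReal.ofReal (ρ ^ k) + ENNReal.ofReal (ρ ^ k)) := by
              rw [add_assoc]; exact add_le_add_right (add_le_add_left hmono _) _
      · calc π A ≤ (KI P (k+1) x₀) A + ENNReal.ofReal (ρ ^ (k+1)) := hsw2 (k+1) A hA
          _ ≤ ((∫⁻ x, (P x) A ∂π) + ENNReal.ofReal (ρ ^ k)) + ENNReal.ofReal (ρ ^ (k+1)) := by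
              rw [← hstep k]; exact add_le_add_left b2 _
          _ ≤ (∫⁻ x, (P x) A ∂π) + (ENNReal.ofReal (ρ ^ k) + ENNReal.ofReal (ρ ^ k)) := by
              rw [add_assoc]; exact add_le_add_right (add_le_add_right hmono _) _
    have hdelta : ∀ δ : NNReal, 0 < δ →
        ∃ k : ℕ, ENNReal.ofReal (ρ ^ k) + ENNReal.ofReal (ρ ^ k) ≤ (δ : ENNReal) := by
      intro δ hδ
      have hδ' : (0:ℝ) < (δ : ℝ) := hδ
      obtain ⟨k, hk⟩ := exists_pow_lt_of_lt_one (show (0:ℝ) < (δ:ℝ)/2 by linarith) hρ1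
      refine ⟨k, ?_⟩
      rw [← ENNReal.ofReal_add (pow_nonneg hρ0.le k) (pow_nonneg hρ0.le k),
        ← ENNReal.ofReal_coe_nnreal]
      exact ENNReal.ofReal_le_ofReal (by linarith)
    refine le_antisymm ?_ ?_
    · refine ENNReal.le_of_forall_pos_le_add fun δ hδ _ => ?_
      obtain ⟨k, hk⟩ := hdelta δ hδ
      calc ∫⁻ x, (P x) A ∂π
          ≤ π A + (ENNReal.ofReal (ρ ^ k) + ENNReal.ofReal (ρ ^ k)) := (hkey k).1
        _ ≤ π A + (δ : ENNReal) := add_le_add_right hk _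
    · refine ENNReal.le_of_forall_pos_le_add fun δ hδ _ => ?_
      obtain ⟨k, hk⟩ := hdelta δ hδ
      calc π A
          ≤ (∫⁻ x, (P x) A ∂π) + (ENNReal.ofReal (ρ ^ k) + ENNReal.ofReal (ρ ^ k)) := (hkey k).2
        _ ≤ (∫⁻ x, (P x) A ∂π) + (δ : ENNReal) := add_le_add_right hk _
  have htvπ : tvDist π ν ≤ ρ := by
    have h := tv_bind_le P ν hclose hρ0.le π
    rwa [hinv] at h
  refine ⟨⟨π, hπprob, hinv, htvπ⟩, ⟨ρ, hρ0, hρ1, ?_⟩⟩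
  intro k hk x
  obtain ⟨m, rfl⟩ : ∃ m, k = m + 1 := ⟨k - 1, by omega⟩
  have hit : kernelIter P (m+1) x = (KI P m x).bind (fun y => P y) := by
    show (kernelIter P m x).bind (fun y => P y) = _
    rw [kernelIter_eq]
  rw [hit]
  have h1 : tvDist ((KI P m x).bind (fun y => P y)) ν ≤ ρ := tv_bind_le P ν hclose hρ0.le _
  have h2 : (0:ℝ) ≤ ρ ^ (m+1) := pow_nonneg hρ0.le _
  linarith
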